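/- Let k > 0, γ > 0, t ≥ 0, set τ := exp(-k·t)·sinh(k·t)/k, and let μ := gaussianReal 0 (γ²·τ). Then for every real S₀, the variance of the function x ↦ cos²(x) + S₀²·sin²(x) with respect to μ equals (1/8)·(1 - S₀²)²·(1 - exp(-4·γ²·τ))², i.e. ∫ (cos²(x) + S₀²·sin²(x))² dμ(x) - (∫ (cos²(x) + S₀²·sin²(x)) dμ(x))² = (1/8)·(1 - S₀²)²·(1 - exp(-4·γ²·τ))². -/

import Mathlib

open ProbabilityTheory MeasureTheory
open scoped NNReal ENNReal

lemma integral_fun_gaussianReal {v : ℝ≥0} (hv : v ≠ 0) (g : ℝ → ℝ) :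
    ∫ x, g x ∂(gaussianReal 0 v) = ∫ x, gaussianPDFReal 0 v x * g x := by
  rw [gaussianReal_of_var_ne_zero 0 hv]
  have : (gaussianPDF 0 v) = fun x => ((Real.toNNReal (gaussianPDFReal 0 v x) : ℝ≥0) : ℝ≥0∞) := by
    ext x; rfl
  rw [this, integral_withDensity_eq_integral_smul
    ((measurable_gaussianPDFReal 0 v).real_toNNReal) g]
  refine integral_congr_ae (Filter.Eventually.of_forall fun x => ?_)
  simp [NNReal.smul_def, Real.coe_toNNReal _ (gaussianPDFReal_nonneg 0 v x), smul_eq_mul]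

lemma integral_cos_gaussianReal (v : ℝ≥0) (a : ℝ) :
    ∫ x, Real.cos (a * x) ∂(gaussianReal 0 v) = Real.exp (-(a ^ 2 * v) / 2) := by
  rcases eq_or_ne v 0 with rfl | hv
  · simp [gaussianReal_zero_var, integral_dirac]
  have hv0 : (0:ℝ) < v := lt_of_le_of_ne v.coe_nonneg (by exact_mod_cast hv.symm)
  have hb : (-(1 / (2 * (v:ℂ)))).re < 0 := by
    have : (-(1 / (2 * (v:ℂ)))) = ((-(1/(2*(v:ℝ))) : ℝ) : ℂ) := by push_cast; ring
    rw [this, Complex.ofReal_re]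
    simp only [neg_neg, Left.neg_neg_iff]
    positivity
  rw [integral_fun_gaussianReal hv]
  have hvc : (v:ℂ) ≠ 0 := by exact_mod_cast hv0.ne'
  have key := integral_cexp_quadratic (b := -(1/(2*(v:ℂ)))) hb (a * Complex.I) 0
  have hint := integrable_cexp_quadratic' (b := -(1/(2*(v:ℂ)))) hb (a * Complex.I) 0
  have hre : ∀ x : ℝ, (Complex.exp (-(1/(2*(v:ℂ))) * x^2 + (a*Complex.I)*x + 0)).re
      = Real.exp (-x^2/(2*v)) * Real.cos (a*x) := by
    intro x
    rw [show -(1/(2*(v:ℂ))) * x^2 + (a*Complex.I)*x + 0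
        = ((-x^2/(2*(v:ℝ)) : ℝ) : ℂ) + ((a*x : ℝ) : ℂ) * Complex.I by
      push_cast; field_simp; ring]
    rw [Complex.exp_add, ← Complex.ofReal_exp, Complex.re_ofReal_mul,
      Complex.exp_ofReal_mul_I_re]
  have hpdf : ∀ x : ℝ, gaussianPDFReal 0 v x * Real.cos (a*x)
      = (Real.sqrt (2 * Real.pi * v))⁻¹ * (Real.exp (-x^2/(2*v)) * Real.cos (a*x)) := by
    intro x
    rw [gaussianPDFReal]
    ring_nf
  calc ∫ x, gaussianPDFReal 0 v x * Real.cos (a * x)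
      = (Real.sqrt (2 * Real.pi * v))⁻¹ * ∫ x, Real.exp (-x^2/(2*v)) * Real.cos (a*x) := by
        simp_rw [hpdf]; rw [integral_const_mul]
    _ = (Real.sqrt (2 * Real.pi * v))⁻¹
        * (∫ x : ℝ, Complex.exp (-(1/(2*(v:ℂ))) * x^2 + (a*Complex.I)*x + 0)).re := by
        have h3 := integral_re hint
        simp only [RCLike.re_to_complex] at h3
        rw [← h3]
        simp_rw [hre]
    _ = Real.exp (-(a ^ 2 * v) / 2) := by
        rw [key]
        have h1 : (Real.pi : ℂ) / -(-(1/(2*(v:ℂ)))) = ((2*Real.pi*v : ℝ):ℂ) := by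
          push_cast; field_simp
        have h2 : (0 : ℂ) - (a*Complex.I)^2/(4 * -(1/(2*(v:ℂ)))) = ((-(a^2*v)/2 : ℝ):ℂ) := by
          field_simp; rw [Complex.I_sq]; push_cast; ring
        rw [h1, h2, ← Complex.ofReal_exp,
          show ((1:ℂ)/2) = ((1/2 : ℝ) : ℂ) by norm_num,
          ← Complex.ofReal_cpow (by positivity), ← Real.rpow_natCast, ← Real.sqrt_eq_rpow]
        · rw [Complex.re_ofReal_mul, Complex.ofReal_re]
          have hs : Real.sqrt (2*Real.pi*v) > 0 := Real.sqrt_pos.mpr (by positivity)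
          field_simp

lemma integrable_cos_gaussianReal (v : ℝ≥0) (a : ℝ) :
    Integrable (fun x => Real.cos (a * x)) (gaussianReal 0 v) := by
  refine (integrable_const (1:ℝ)).mono' ?_ ?_
  · exact (Real.continuous_cos.comp (continuous_const.mul continuous_id)).aestronglyMeasurable
  · exact Filter.Eventually.of_forall fun x => by
      simpa using Real.abs_cos_le_one (a * x)

theorem pauli_fidelity_variance_OU_calibrated (k γ t : ℝ) (hk : 0 < k) (hγ : 0 < γ)
    (ht : 0 ≤ t)
    (τ : ℝ) (hτ : τ = Real.exp (-k * t) * Real.sinh (k * t) / k)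
    (μ : Measure ℝ) (hμ : μ = gaussianReal 0 (Real.toNNReal (γ ^ 2 * τ)))
    (S₀ : ℝ) :
    ∫ x, (Real.cos x ^ 2 + S₀ ^ 2 * Real.sin x ^ 2) ^ 2 ∂μ
        - (∫ x, (Real.cos x ^ 2 + S₀ ^ 2 * Real.sin x ^ 2) ∂μ) ^ 2 =
      (1 / 8) * (1 - S₀ ^ 2) ^ 2 * (1 - Real.exp (-4 * γ ^ 2 * τ)) ^ 2 := by
  subst hμ
  have hτ0 : 0 ≤ τ := by
    rw [hτ]
    have h1 : 0 ≤ Real.sinh (k * t) := Real.sinh_nonneg_iff.mpr (by positivity)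
    positivity
  set v : ℝ≥0 := Real.toNNReal (γ ^ 2 * τ) with hvdef
  have hv : (v : ℝ) = γ ^ 2 * τ := Real.coe_toNNReal _ (by positivity)
  set A : ℝ := (1 + S₀ ^ 2) / 2
  set B : ℝ := (1 - S₀ ^ 2) / 2
  have hf : ∀ x : ℝ, Real.cos x ^ 2 + S₀ ^ 2 * Real.sin x ^ 2 = A + B * Real.cos (2 * x) := by
    intro x
    have h1 := Real.cos_sq x
    have h2 := Real.sin_sq x
    rw [h2, h1]; ring
  have hf2 : ∀ x : ℝ, (Real.cos x ^ 2 + S₀ ^ 2 * Real.sin x ^ 2) ^ 2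
      = (A ^ 2 + B ^ 2 / 2) + (2 * A * B) * Real.cos (2 * x) + (B ^ 2 / 2) * Real.cos (4 * x) := by
    intro x
    rw [hf x]
    have h4 : Real.cos (2 * x) ^ 2 = 1 / 2 + Real.cos (2 * (2 * x)) / 2 := Real.cos_sq (2 * x)
    rw [show (4 : ℝ) * x = 2 * (2 * x) by ring] at *
    nlinarith [h4]
  have hprob : IsProbabilityMeasure (gaussianReal 0 v) := inferInstance
  have I1 : ∫ x, (Real.cos x ^ 2 + S₀ ^ 2 * Real.sin x ^ 2) ∂(gaussianReal 0 v)
      = A + B * Real.exp (-(2 ^ 2 * v) / 2) := by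
    simp_rw [hf]
    rw [integral_add (integrable_const A) ((integrable_cos_gaussianReal v 2).const_mul B),
      integral_const, integral_const_mul, integral_cos_gaussianReal]
    simp
  have I2 : ∫ x, (Real.cos x ^ 2 + S₀ ^ 2 * Real.sin x ^ 2) ^ 2 ∂(gaussianReal 0 v)
      = (A ^ 2 + B ^ 2 / 2) + (2 * A * B) * Real.exp (-(2 ^ 2 * v) / 2)
        + (B ^ 2 / 2) * Real.exp (-(4 ^ 2 * v) / 2) := by
    simp_rw [hf2]
    have ha : Integrable (fun x => (A ^ 2 + B ^ 2 / 2) + (2 * A * B) * Real.cos (2 * x))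
        (gaussianReal 0 v) := by
      exact (integrable_const _).add ((integrable_cos_gaussianReal v 2).const_mul _)
    have hb : Integrable (fun x => (B ^ 2 / 2) * Real.cos (4 * x)) (gaussianReal 0 v) :=
      (integrable_cos_gaussianReal v 4).const_mul _
    rw [integral_add ha hb,
      integral_add (integrable_const _) ((integrable_cos_gaussianReal v 2).const_mul _),
      integral_const, integral_const_mul, integral_const_mul,
      integral_cos_gaussianReal, integral_cos_gaussianReal]
    simp
  rw [I1, I2]
  have e4 : Real.exp (-(4 ^ 2 * (v:ℝ)) / 2) = Real.exp (-(2 ^ 2 * (v:ℝ)) / 2) ^ 4 := by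
    rw [← Real.exp_nat_mul]
    congr 1
    push_cast; ring
  have e2 : Real.exp (-4 * γ ^ 2 * τ) = Real.exp (-(2 ^ 2 * (v:ℝ)) / 2) ^ 2 := by
    rw [← Real.exp_nat_mul]
    congr 1
    rw [hv]; push_cast; ring
  rw [e4, e2]
  ring
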